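/- Let R > 0, let k_c : [0,R]×[0,R] → ℝ be continuous and symmetric (k_c(x,y) = k_c(y,x)), and let u : [0,R] → ℝ be continuous. Define C^R(u)(x) = ∫_0^x ∫_{x−y}^{R−y} y · k_c(y,z) u(y) u(z) dz dy and the truncated coagulation operator Q^R_c(u)(x) = (1/2)∫_0^x k_c(y, x−y) u(y) u(x−y) dy − u(x) ∫_0^{R−x} k_c(x,y) u(y) dy. Then C^R(u) is differentiable on (0,R) and for every x ∈ (0,R), (d/dx) C^R(u)(x) = −x · Q^R_c(u)(x). -/

import Mathlib

open MeasureTheory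

/-- The truncated conservative coagulation flux
`C^R(u)(x) = ∫_0^x ∫_{x−y}^{R−y} y · k_c(y,z) u(y) u(z) dz dy`. -/
noncomputable def coagFluxR (R : ℝ) (kc : ℝ → ℝ → ℝ) (u : ℝ → ℝ) (x : ℝ) : ℝ :=
  ∫ y in (0:ℝ)..x, ∫ z in (x - y)..(R - y), y * kc y z * u y * u z

/-- The truncated coagulation operator
`Q^R_c(u)(x) = (1/2)∫_0^x k_c(y,x−y) u(y) u(x−y) dy − u(x) ∫_0^{R−x} k_c(x,y) u(y) dy`. -/
noncomputable def QcR (R : ℝ) (kc : ℝ → ℝ → ℝ) (u : ℝ → ℝ) (x : ℝ) : ℝ :=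
  (1 / 2) * (∫ y in (0:ℝ)..x, kc y (x - y) * u y * u (x - y))
    - u x * ∫ y in (0:ℝ)..(R - x), kc x y * u y

lemma mySwap {h : ℝ → ℝ → ℝ} (hh : Continuous fun p : ℝ × ℝ => h p.1 p.2) (a b c d : ℝ) :
    (∫ y in a..b, ∫ s in c..d, h y s) = ∫ s in c..d, ∫ y in a..b, h y s := by
  have base : ∀ a b c d : ℝ, a ≤ b → c ≤ d →
      (∫ y in a..b, ∫ s in c..d, h y s) = ∫ s in c..d, ∫ y in a..b, h y s := by
    intro a b c d hab hcd
    rw [intervalIntegral.integral_of_le hab, intervalIntegral.integral_of_le hcd]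
    simp_rw [intervalIntegral.integral_of_le hab, intervalIntegral.integral_of_le hcd]
    apply MeasureTheory.integral_integral_swap
    rw [Measure.prod_restrict, ← Measure.volume_eq_prod]
    have hcomp : IsCompact (Set.Icc a b ×ˢ Set.Icc c d) := isCompact_Icc.prod isCompact_Icc
    have hio : IntegrableOn (Function.uncurry h) (Set.Icc a b ×ˢ Set.Icc c d) :=
      ContinuousOn.integrableOn_compact hcomp hh.continuousOn
    exact hio.mono_set (Set.prod_mono Set.Ioc_subset_Icc_self Set.Ioc_subset_Icc_self)
  rcases le_total a b with hab | hab <;> rcases le_total c d with hcd | hcd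
  · exact base a b c d hab hcd
  · simp_rw [intervalIntegral.integral_symm d c]
    simp_rw [intervalIntegral.integral_neg]
    rw [base a b d c hab hcd]
  · simp_rw [intervalIntegral.integral_symm b a]
    simp_rw [intervalIntegral.integral_neg]
    rw [base b a c d hab hcd]
  · simp_rw [intervalIntegral.integral_symm b a, intervalIntegral.integral_symm d c]
    simp_rw [intervalIntegral.integral_neg]
    simp_rw [neg_neg]
    rw [base b a d c hab hcd]

lemma key (R : ℝ) (hR : 0 < R) (kc : ℝ → ℝ → ℝ) (u : ℝ → ℝ)
    (hkc : Continuous fun p : ℝ × ℝ => kc p.1 p.2)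
    (hsym : ∀ x y : ℝ, kc x y = kc y x)
    (hu : Continuous u) :
    ∀ x ∈ Set.Ioo (0:ℝ) R, HasDerivAt (coagFluxR R kc u) (-(x * QcR R kc u x)) x := by
  intro x hx
  set h : ℝ → ℝ → ℝ := fun y s => y * kc y (s - y) * u y * u (s - y) with hdef
  have hh : Continuous fun p : ℝ × ℝ => h p.1 p.2 := by
    apply Continuous.mul
    apply Continuous.mul
    apply Continuous.mul
    · exact continuous_fst
    · exact hkc.comp (continuous_fst.prodMk (continuous_snd.sub continuous_fst))
    · exact hu.comp continuous_fst
    · exact hu.comp (continuous_snd.sub continuous_fst)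
  -- curried continuity
  have hh1 : ∀ t : ℝ, Continuous (h t) := fun t => hh.comp (Continuous.prodMk_right t)
  have hh2 : ∀ s : ℝ, Continuous fun y => h y s :=
    fun s => hh.comp (continuous_id.prodMk continuous_const)
  -- rewrite coagFluxR
  have hC : coagFluxR R kc u = fun x => ∫ y in (0:ℝ)..x, ∫ s in x..R, h y s := by
    funext w
    unfold coagFluxR
    refine intervalIntegral.integral_congr fun y _ => ?_
    exact (intervalIntegral.integral_comp_sub_right (fun z => y * kc y z * u y * u z) y).symm
  -- joint continuity of G
  have Gcont : Continuous fun p : ℝ × ℝ => ∫ s in p.2..R, h p.1 s := by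
    have g1 : Continuous fun p : ℝ × ℝ => ∫ s in R..p.2, h p.1 s := by
      apply intervalIntegral.continuous_parametric_intervalIntegral_of_continuous
        (f := fun (p : ℝ × ℝ) t => h p.1 t) (s := fun p : ℝ × ℝ => p.2)
      · exact hh.comp ((continuous_fst.comp continuous_fst).prodMk continuous_snd)
      · exact continuous_snd
    exact g1.neg.congr fun p => (intervalIntegral.integral_symm R p.2).symm
  have Kcont : Continuous fun t => ∫ y in (0:ℝ)..x, h y t := by
    apply intervalIntegral.continuous_parametric_intervalIntegral_of_continuous'
      (f := fun (t : ℝ) y => h y t)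
    exact hh.comp (continuous_snd.prodMk continuous_fst)
  set G : ℝ → ℝ → ℝ := fun t b => ∫ s in b..R, h t s with hGdef
  set K : ℝ → ℝ := fun t => ∫ y in (0:ℝ)..x, h y t with hKdef
  set L : ℝ := G x x - K x with hLdef
  -- difference identity
  have hdiff : ∀ x' : ℝ, (∫ y in (0:ℝ)..x', ∫ s in x'..R, h y s)
      - (∫ y in (0:ℝ)..x, ∫ s in x..R, h y s) = ∫ t in x..x', (G t x' - K t) := by
    intro x'
    have i1 : IntervalIntegrable (fun y => G y x') volume 0 x :=
      (Gcont.comp (continuous_id.prodMk continuous_const)).intervalIntegrable 0 x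
    have i2 : IntervalIntegrable (fun y => G y x') volume x x' :=
      (Gcont.comp (continuous_id.prodMk continuous_const)).intervalIntegrable x x'
    have i3 : IntervalIntegrable (fun y => G y x) volume 0 x :=
      (Gcont.comp (continuous_id.prodMk continuous_const)).intervalIntegrable 0 x
    have i4 : IntervalIntegrable (fun y => ∫ s in x'..x, h y s) volume 0 x := by
      apply Continuous.intervalIntegrable
      apply intervalIntegral.continuous_parametric_intervalIntegral_of_continuous'
        (f := fun (y : ℝ) s => h y s)
      exact hh
    have iK : IntervalIntegrable K volume x x' := Kcont.intervalIntegrable x x'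
    have iGx' : IntervalIntegrable (fun t => G t x') volume x x' := i2
    have e1 : (∫ y in (0:ℝ)..x', G y x')
        = (∫ y in (0:ℝ)..x, G y x') + ∫ t in x..x', G t x' :=
      (intervalIntegral.integral_add_adjacent_intervals i1 i2).symm
    have e2 : ∀ y : ℝ, G y x' = (∫ s in x'..x, h y s) + G y x := fun y =>
      (intervalIntegral.integral_add_adjacent_intervals
        ((hh1 y).intervalIntegrable x' x) ((hh1 y).intervalIntegrable x R)).symm
    have e3 : (∫ y in (0:ℝ)..x, G y x')
        = (∫ y in (0:ℝ)..x, ∫ s in x'..x, h y s) + ∫ y in (0:ℝ)..x, G y x := by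
      rw [← intervalIntegral.integral_add i4 i3]
      exact intervalIntegral.integral_congr fun y _ => e2 y
    have e4 : (∫ y in (0:ℝ)..x, ∫ s in x'..x, h y s) = - ∫ s in x..x', K s := by
      rw [mySwap hh]
      rw [intervalIntegral.integral_symm x' x, neg_neg]
    have e5 : (∫ t in x..x', (G t x' - K t)) = (∫ t in x..x', G t x') - ∫ t in x..x', K t :=
      intervalIntegral.integral_sub iGx' iK
    simp only [hGdef] at e1 e3 ⊢
    rw [e1, e3, e4, e5]
    ring
  -- the derivative
  have hL : HasDerivAt (fun x' => ∫ y in (0:ℝ)..x', ∫ s in x'..R, h y s) L x := by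
    rw [hasDerivAt_iff_isLittleO]
    rw [Asymptotics.isLittleO_iff]
    intro ε hε
    have hψ : ContinuousAt (fun p : ℝ × ℝ => G p.1 p.2 - K p.1) (x, x) :=
      (Gcont.sub (Kcont.comp continuous_fst)).continuousAt
    rw [Metric.continuousAt_iff] at hψ
    obtain ⟨δ, hδ, hball⟩ := hψ ε hε
    filter_upwards [Metric.ball_mem_nhds x hδ] with x' hx'
    rw [Metric.mem_ball] at hx'
    have key1 : (∫ y in (0:ℝ)..x', ∫ s in x'..R, h y s)
        - (∫ y in (0:ℝ)..x, ∫ s in x..R, h y s) - (x' - x) • L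
        = ∫ t in x..x', (G t x' - K t - L) := by
      rw [hdiff x']
      have : (x' - x) • L = ∫ t in x..x', L := by
        rw [intervalIntegral.integral_const]
      rw [this, ← intervalIntegral.integral_sub]
      · exact ((Gcont.comp (continuous_id.prodMk continuous_const)).sub
          Kcont).intervalIntegrable x x'
      · exact intervalIntegrable_const
    rw [key1]
    have hbound : ∀ t ∈ Set.uIoc x x', ‖G t x' - K t - L‖ ≤ ε := by
      intro t ht
      have htx : |t - x| ≤ |x' - x| := by
        rcases Set.mem_uIoc.1 ht with ⟨h1, h2⟩ | ⟨h1, h2⟩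
        · rw [abs_of_pos (by linarith)]
          calc t - x ≤ x' - x := by linarith
          _ ≤ |x' - x| := le_abs_self _
        · rw [abs_of_nonpos (by linarith)]
          calc -(t - x) = x - t := by ring
          _ ≤ x - x' := by linarith
          _ = -(x' - x) := by ring
          _ ≤ |x' - x| := neg_le_abs _
      have hd : dist (t, x') (x, x) < δ := by
        rw [Prod.dist_eq]
        apply max_lt
        · calc dist t x = |t - x| := Real.dist_eq t x
          _ ≤ |x' - x| := htx
          _ = dist x' x := (Real.dist_eq x' x).symm
          _ < δ := hx'
        · exact hx'
      have := hball hd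
      rw [Real.dist_eq] at this
      have hLe : G x x - K x = L := hLdef.symm
      calc ‖G t x' - K t - L‖ = |G t x' - K t - (G x x - K x)| := by rw [hLe]; rfl
      _ ≤ ε := le_of_lt this
    calc ‖∫ t in x..x', (G t x' - K t - L)‖ ≤ ε * |x' - x| :=
      intervalIntegral.norm_integral_le_of_norm_le_const hbound
    _ = ε * ‖x' - x‖ := by rw [Real.norm_eq_abs]
  -- identify L
  have hA : G x x = x * u x * ∫ y in (0:ℝ)..(R - x), kc x y * u y := by
    have e := intervalIntegral.integral_comp_sub_right
      (fun z => x * kc x z * u x * u z) x (a := x) (b := R)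
    have e2 : G x x = ∫ z in (x - x)..(R - x), x * kc x z * u x * u z := e
    rw [sub_self] at e2
    rw [e2]
    have e3 : (∫ z in (0:ℝ)..(R - x), x * kc x z * u x * u z)
        = ∫ z in (0:ℝ)..(R - x), (x * u x) * (kc x z * u z) :=
      intervalIntegral.integral_congr fun z _ => by ring
    rw [e3, intervalIntegral.integral_const_mul]
  have hB : K x + K x = x * ∫ y in (0:ℝ)..x, kc y (x - y) * u y * u (x - y) := by
    have e := intervalIntegral.integral_comp_sub_left
      (fun y => y * kc y (x - y) * u y * u (x - y)) x (a := 0) (b := x)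
    rw [sub_zero, sub_self] at e
    have e2 : K x = ∫ t in (0:ℝ)..x,
        (x - t) * (kc t (x - t) * u t * u (x - t)) := by
      have lhs : K x = ∫ t in (0:ℝ)..x,
          (fun y => y * kc y (x - y) * u y * u (x - y)) t := rfl
      rw [lhs, ← e]
      refine intervalIntegral.integral_congr fun t _ => ?_
      show (x - t) * kc (x - t) (x - (x - t)) * u (x - t) * u (x - (x - t)) = _
      rw [sub_sub_cancel, hsym (x - t) t]
      ring
    have e3 : K x = ∫ t in (0:ℝ)..x, t * (kc t (x - t) * u t * u (x - t)) := by
      refine intervalIntegral.integral_congr fun t _ => ?_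
      show t * kc t (x - t) * u t * u (x - t) = t * (kc t (x - t) * u t * u (x - t))
      ring
    have i5 : IntervalIntegrable (fun t => (x - t) * (kc t (x - t) * u t * u (x - t)))
        volume 0 x := by
      apply Continuous.intervalIntegrable
      have : Continuous fun t => kc t (x - t) :=
        hkc.comp (continuous_id.prodMk (continuous_const.sub continuous_id))
      fun_prop
    have i6 : IntervalIntegrable (fun t => t * (kc t (x - t) * u t * u (x - t)))
        volume 0 x := by
      apply Continuous.intervalIntegrable
      have : Continuous fun t => kc t (x - t) :=
        hkc.comp (continuous_id.prodMk (continuous_const.sub continuous_id))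
      fun_prop
    calc K x + K x
        = (∫ t in (0:ℝ)..x, (x - t) * (kc t (x - t) * u t * u (x - t)))
          + ∫ t in (0:ℝ)..x, t * (kc t (x - t) * u t * u (x - t)) := by
          rw [← e2, ← e3]
      _ = ∫ t in (0:ℝ)..x, ((x - t) * (kc t (x - t) * u t * u (x - t))
          + t * (kc t (x - t) * u t * u (x - t))) :=
          (intervalIntegral.integral_add i5 i6).symm
      _ = ∫ t in (0:ℝ)..x, x * (kc t (x - t) * u t * u (x - t)) :=
          intervalIntegral.integral_congr fun t _ => by ring
      _ = x * ∫ t in (0:ℝ)..x, kc t (x - t) * u t * u (x - t) :=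
          intervalIntegral.integral_const_mul _ _
  have hLval : L = -(x * QcR R kc u x) := by
    rw [hLdef, QcR, hA]
    have : K x = x / 2 * ∫ y in (0:ℝ)..x, kc y (x - y) * u y * u (x - y) := by
      linarith [hB]
    rw [this]
    ring
  rw [hC]
  rw [← hLval]
  exact hL


/-- the truncated coagulation operator admits the conservative form
`x·Q^R_c(u) = −∂_x C^R(u)` on `(0,R)`. -/
theorem truncated_coagulation_conservative_form
    (R : ℝ) (hR : 0 < R) (kc : ℝ → ℝ → ℝ) (u : ℝ → ℝ)
    (hkc_cont : ContinuousOn (fun p : ℝ × ℝ => kc p.1 p.2) (Set.Icc 0 R ×ˢ Set.Icc 0 R))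
    (hkc_symm : ∀ x ∈ Set.Icc (0:ℝ) R, ∀ y ∈ Set.Icc (0:ℝ) R, kc x y = kc y x)
    (hu_cont : ContinuousOn u (Set.Icc 0 R)) :
    ∀ x ∈ Set.Ioo (0:ℝ) R, HasDerivAt (coagFluxR R kc u) (-(x * QcR R kc u x)) x := by
  intro x hx
  set c : ℝ → ℝ := fun t => max 0 (min t R) with hcdef
  have hcmem : ∀ t, c t ∈ Set.Icc (0:ℝ) R :=
    fun t => ⟨le_max_left _ _, max_le hR.le (min_le_right t R)⟩
  have hcfix : ∀ t ∈ Set.Icc (0:ℝ) R, c t = t := by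
    intro t ht
    rw [hcdef]
    simp only
    rw [min_eq_left ht.2, max_eq_right ht.1]
  have hccont : Continuous c := continuous_const.max (continuous_id.min continuous_const)
  set kc' : ℝ → ℝ → ℝ := fun a b => kc (c a) (c b) with hkc'def
  set u' : ℝ → ℝ := fun t => u (c t) with hu'def
  have hu' : Continuous u' := hu_cont.comp_continuous hccont hcmem
  have hkc' : Continuous fun p : ℝ × ℝ => kc' p.1 p.2 := by
    show Continuous ((fun p : ℝ × ℝ => kc p.1 p.2) ∘ fun p : ℝ × ℝ => (c p.1, c p.2))
    exact hkc_cont.comp_continuous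
      ((hccont.comp continuous_fst).prodMk (hccont.comp continuous_snd))
      (fun p => Set.mk_mem_prod (hcmem p.1) (hcmem p.2))
  have hsym' : ∀ a b : ℝ, kc' a b = kc' b a :=
    fun a b => hkc_symm _ (hcmem a) _ (hcmem b)
  have hkey := key R hR kc' u' hkc' hsym' hu' x hx
  -- transfer QcR
  have hxI : x ∈ Set.Icc (0:ℝ) R := ⟨hx.1.le, hx.2.le⟩
  have hQ : QcR R kc' u' x = QcR R kc u x := by
    unfold QcR
    have h1 : (∫ y in (0:ℝ)..x, kc' y (x - y) * u' y * u' (x - y))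
        = ∫ y in (0:ℝ)..x, kc y (x - y) * u y * u (x - y) := by
      refine intervalIntegral.integral_congr fun y hy => ?_
      rw [Set.uIcc_of_le hx.1.le] at hy
      have hy1 : y ∈ Set.Icc (0:ℝ) R := ⟨hy.1, hy.2.trans hx.2.le⟩
      have hy2 : x - y ∈ Set.Icc (0:ℝ) R := ⟨by linarith [hy.2], by linarith [hy.1, hx.2.le]⟩
      show kc (c y) (c (x - y)) * u (c y) * u (c (x - y)) = _
      rw [hcfix y hy1, hcfix (x - y) hy2]
    have h2 : (∫ y in (0:ℝ)..(R - x), kc' x y * u' y)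
        = ∫ y in (0:ℝ)..(R - x), kc x y * u y := by
      refine intervalIntegral.integral_congr fun y hy => ?_
      rw [Set.uIcc_of_le (by linarith [hx.2] : (0:ℝ) ≤ R - x)] at hy
      have hy1 : y ∈ Set.Icc (0:ℝ) R := ⟨hy.1, by linarith [hy.2, hx.1]⟩
      show kc (c x) (c y) * u (c y) = _
      rw [hcfix x hxI, hcfix y hy1]
    have h3 : u' x = u x := by show u (c x) = u x; rw [hcfix x hxI]
    rw [h1, h2, h3]
  -- transfer coagFluxR near x
  have hEq : coagFluxR R kc u =ᶠ[nhds x] coagFluxR R kc' u' := by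
    filter_upwards [isOpen_Ioo.mem_nhds hx] with z hz
    unfold coagFluxR
    refine intervalIntegral.integral_congr fun y hy => ?_
    rw [Set.uIcc_of_le hz.1.le] at hy
    have hy1 : y ∈ Set.Icc (0:ℝ) R := ⟨hy.1, hy.2.trans hz.2.le⟩
    refine intervalIntegral.integral_congr fun w hw => ?_
    rw [Set.uIcc_of_le (by linarith [hy.2, hz.2.le] : z - y ≤ R - y)] at hw
    have hw1 : w ∈ Set.Icc (0:ℝ) R := ⟨by linarith [hw.1, hy.2], by linarith [hw.2, hy.1]⟩
    show y * kc y w * u y * u w = y * kc (c y) (c w) * u (c y) * u (c w)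
    rw [hcfix y hy1, hcfix w hw1]
  rw [← hQ]
  exact hkey.congr_of_eventuallyEq hEq
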